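/- Let q ≠ p be primes, P a finite p-group, V a finite-dimensional 𝔽_q P-module with C_V(P) = 0, and σ an automorphism of V of order p commuting with the P-action such that σv ∈ span_{𝔽_q}⟨v⟩ for all v ∈ V. Then there exists 0 ≠ v ∈ V with |P : C_P(v)| minimal among nonzero vectors, and some g ∈ P with σv = gv. -/

import Mathlib

open Polynomial

lemma scalar_aux {K V : Type*} [Field K] [AddCommGroup V] [Module K V]
    (f : V →ₗ[K] V) (h : ∀ v : V, ∃ c : K, f v = c • v)
    {v₀ : V} (hv₀ : v₀ ≠ 0) {c : K} (hc : f v₀ = c • v₀) (v : V) : f v = c • v := by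
  by_cases hv : v = 0
  · simp [hv]
  obtain ⟨d, hd⟩ := h v
  by_cases hdep : ∃ a : K, v = a • v₀
  · obtain ⟨a, rfl⟩ := hdep
    rw [map_smul, hc, smul_comm]
  · obtain ⟨e, he⟩ := h (v₀ + v)
    rw [map_add, hc, hd] at he
    have key : (e - c) • v₀ = (d - e) • v := by
      rw [sub_smul, sub_smul, smul_add] at *
      rw [eq_comm, sub_eq_sub_iff_add_eq_add, add_comm (d • v) (c • v₀), he]
    have hec : e = c := by
      by_contra hne
      apply hdep
      have h1 : v₀ = ((e - c)⁻¹ * (d - e)) • v := by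
        rw [mul_smul, ← key, ← mul_smul, inv_mul_cancel₀ (sub_ne_zero.mpr hne), one_smul]
      have h2 : (e - c)⁻¹ * (d - e) ≠ 0 := by
        intro h0; rw [h0, zero_smul] at h1; exact hv₀ h1
      exact ⟨((e - c)⁻¹ * (d - e))⁻¹, by rw [h1, ← mul_smul, inv_mul_cancel₀ h2, one_smul]⟩
    rw [hec] at key
    rw [sub_self, zero_smul, eq_comm] at key
    have : d = c := by
      have := (smul_eq_zero.mp key).resolve_right hv
      rwa [sub_eq_zero] at this
    rw [hd, this]



/-- The stabilizer `C_P(v)` of a vector `v` under a representation `ρ` of `P`. -/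
def repStabilizer {K P V : Type*} [CommSemiring K] [Group P] [AddCommMonoid V]
    [Module K V] (ρ : Representation K P V) (v : V) : Subgroup P where
  carrier := {g | ρ g v = v}
  one_mem' := by simp
  mul_mem' := by
    intro a b ha hb
    simp only [Set.mem_setOf_eq] at *
    rw [map_mul, Module.End.mul_apply, hb, ha]
  inv_mem' := by
    intro a ha
    simp only [Set.mem_setOf_eq] at *
    calc ρ a⁻¹ v = ρ a⁻¹ (ρ a v) := by rw [ha]
    _ = ρ (a⁻¹ * a) v := by rw [map_mul, Module.End.mul_apply]
    _ = v := by simp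

/-- Let `q ≠ p` be primes, `P` a finite `p`-group, `V` a finite-dimensional
`𝔽_q P`-module with `C_V(P) = 0`, and `σ` an automorphism of `V` of order `p`
commuting with the `P`-action such that `σ v ∈ span ⟨v⟩` for all `v`. Then there is
`0 ≠ v ∈ V` with `|P : C_P(v)|` minimal among nonzero vectors and `g ∈ P` with
`σ v = g v`. -/
theorem scalar_order_p_automorphism {p q : ℕ} (hp : p.Prime) (hq : Fact q.Prime)
    (hqp : q ≠ p)
    {P : Type} [Group P] [Finite P] (hP : IsPGroup p P)
    {V : Type} [AddCommGroup V] [Module (ZMod q) V] [FiniteDimensional (ZMod q) V]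
    (ρ : Representation (ZMod q) P V)
    (hfix : ∀ v : V, (∀ g : P, ρ g v = v) → v = 0)
    (σ : V ≃ₗ[ZMod q] V) (hσp : σ ^ p = 1) (hσ1 : σ ≠ 1)
    (hcomm : ∀ g : P, ∀ v : V, σ (ρ g v) = ρ g (σ v))
    (hscal : ∀ v : V, ∃ c : ZMod q, σ v = c • v) :
    ∃ v : V, v ≠ 0 ∧
      (∀ w : V, w ≠ 0 → (repStabilizer ρ v).index ≤ (repStabilizer ρ w).index) ∧
      ∃ g : P, σ v = ρ g v := by
  classical
  haveI : Fact p.Prime := ⟨hp⟩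
  -- V is nontrivial
  obtain ⟨v₁, hv₁⟩ : ∃ v : V, v ≠ 0 := by
    by_contra h
    push_neg at h
    refine hσ1 (LinearEquiv.ext fun v => ?_)
    exact (h _).trans (h _).symm
  -- σ is a global scalar c
  obtain ⟨c, hc⟩ := hscal v₁
  have hσc : ∀ v : V, σ v = c • v := fun v =>
    scalar_aux (σ : V →ₗ[ZMod q] V) hscal hv₁ hc v
  have hc1 : c ≠ 1 := by
    intro h
    refine hσ1 (LinearEquiv.ext fun v => ?_)
    rw [hσc v, h, one_smul]; rfl
  have hσpow : ∀ n : ℕ, ∀ v : V, (σ ^ n) v = c ^ n • v := by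
    intro n
    induction n with
    | zero => intro v; simp
    | succ n ih =>
      intro v
      rw [pow_succ]
      show (σ ^ n) (σ v) = c ^ (n + 1) • v
      rw [hσc v, map_smul, ih, smul_smul, ← pow_succ']
  have hcp : c ^ p = 1 := by
    have h1 := hσpow p v₁
    rw [hσp] at h1
    have h1' : v₁ = c ^ p • v₁ := h1
    have h2 : (c ^ p - 1) • v₁ = 0 := by
      rw [sub_smul, one_smul, ← h1', sub_self]
    rcases smul_eq_zero.mp h2 with h | h
    · exact sub_eq_zero.mp h
    · exact absurd h hv₁
  have hordc : orderOf c = p := orderOf_eq_prime hcp hc1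
  -- minimal index vector
  set S : Set ℕ := {n | ∃ w : V, w ≠ 0 ∧ (repStabilizer ρ w).index = n} with hSdef
  have hS : S.Nonempty := ⟨_, v₁, hv₁, rfl⟩
  obtain ⟨v₀, hv₀, hv₀idx⟩ : ∃ w : V, w ≠ 0 ∧ (repStabilizer ρ w).index = sInf S :=
    Nat.sInf_mem hS
  have hmin : ∀ w : V, w ≠ 0 → sInf S ≤ (repStabilizer ρ w).index := fun w hw =>
    Nat.sInf_le ⟨w, hw, rfl⟩
  set C := repStabilizer ρ v₀ with hCdef
  have hCtop : C ≠ ⊤ := by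
    intro h
    apply hv₀
    apply hfix
    intro g
    have hg : g ∈ C := h ▸ Subgroup.mem_top g
    exact hg
  -- normalizer condition
  have hnil : Group.IsNilpotent P := hP.isNilpotent
  have hNC : C < Subgroup.normalizer (C : Set P) :=
    normalizerCondition_of_isNilpotent C (lt_top_iff_ne_top.mpr hCtop)
  obtain ⟨g₀, hg₀N, hg₀C⟩ : ∃ g, g ∈ Subgroup.normalizer (C : Set P) ∧ g ∉ C := by
    obtain ⟨g, hgN, hgC⟩ := SetLike.exists_of_lt hNC
    exact ⟨g, hgN, hgC⟩
  obtain ⟨k, hk⟩ := hP g₀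
  have hQ : ∃ j : ℕ, g₀ ^ p ^ j ∈ C := ⟨k, by rw [hk]; exact C.one_mem⟩
  have hj0 : Nat.find hQ ≠ 0 := by
    intro h
    apply hg₀C
    have := Nat.find_spec hQ
    rwa [h, pow_zero, pow_one] at this
  set g := g₀ ^ p ^ (Nat.find hQ - 1) with hgdef
  have hgC : g ∉ C := Nat.find_min hQ (by omega)
  have hgpC : g ^ p ∈ C := by
    rw [hgdef, ← pow_mul, ← pow_succ]
    have h1 : Nat.find hQ - 1 + 1 = Nat.find hQ := by omega
    rw [h1]
    exact Nat.find_spec hQ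
  have hgN : g ∈ Subgroup.normalizer (C : Set P) := Subgroup.pow_mem _ hg₀N _
  have hconj : ∀ x : P, x ∈ C → g⁻¹ * x * g ∈ C := by
    intro x hx
    have h1 := (Subgroup.mem_normalizer_iff.mp ((Subgroup.normalizer (C : Set P)).inv_mem hgN) x).mp hx
    rwa [inv_inv] at h1
  -- the fixed space W of C
  set W : Submodule (ZMod q) V :=
    { carrier := {w | ∀ x : P, x ∈ C → ρ x w = w}
      add_mem' := fun {a b} ha hb x hx => by rw [map_add, ha x hx, hb x hx]
      zero_mem' := fun x hx => map_zero _
      smul_mem' := fun r a ha x hx => by rw [map_smul, ha x hx] } with hWdef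
  have hmemW : ∀ w : V, w ∈ W ↔ ∀ x : P, x ∈ C → ρ x w = w := fun w => Iff.rfl
  have hv₀W : v₀ ∈ W := fun x hx => hx
  have hWg : ∀ w ∈ W, ρ g w ∈ W := by
    intro w hw x hx
    have hx' : g⁻¹ * x * g ∈ C := hconj x hx
    have h1 : x * g = g * (g⁻¹ * x * g) := by group
    calc ρ x (ρ g w) = ρ (x * g) w := by rw [map_mul, Module.End.mul_apply]
    _ = ρ (g * (g⁻¹ * x * g)) w := by rw [← h1]
    _ = ρ g (ρ (g⁻¹ * x * g) w) := by rw [map_mul, Module.End.mul_apply]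
    _ = ρ g w := by rw [hw _ hx']
  -- the action of g on W
  set A : Module.End (ZMod q) W := LinearMap.restrict (ρ g) hWg with hAdef
  have hAcoe : ∀ w : W, (A w : V) = ρ g (w : V) := fun w => rfl
  have hApow : ∀ n : ℕ, ∀ w : W, ((A ^ n) w : V) = ρ (g ^ n) (w : V) := by
    intro n
    induction n with
    | zero => intro w; simp
    | succ n ih =>
      intro w
      rw [pow_succ, Module.End.mul_apply, ih, hAcoe, ← Module.End.mul_apply, ← map_mul,
        ← pow_succ]
  have hAp : A ^ p = 1 := by
    apply LinearMap.ext
    intro w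
    apply Subtype.ext
    rw [hApow p w]
    exact w.2 (g ^ p) hgpC
  -- A has an eigenvalue which is a p-th root of unity
  haveI : Nontrivial W := nontrivial_of_ne ⟨v₀, hv₀W⟩ 0
    (fun h => hv₀ (congrArg Subtype.val h))
  have hmonic : (X ^ p - 1 : (ZMod q)[X]).Monic := by
    have h1 := Polynomial.monic_X_pow_sub_C (1 : ZMod q) hp.ne_zero
    simpa using h1
  have haeval : Polynomial.aeval A (X ^ p - 1 : (ZMod q)[X]) = 0 := by
    rw [map_sub, map_pow, Polynomial.aeval_X, map_one, hAp, sub_self]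
  have hint : IsIntegral (ZMod q) A :=
    ⟨X ^ p - 1, hmonic, by rwa [← Polynomial.aeval_def]⟩
  have hdvd : minpoly (ZMod q) A ∣ (X ^ p - 1 : (ZMod q)[X]) := minpoly.dvd _ _ haeval
  have hcprim : IsPrimitiveRoot c p := hordc ▸ IsPrimitiveRoot.orderOf c
  have hsplits : Splits (X ^ p - 1 : (ZMod q)[X]) := by
    rw [X_pow_sub_one_eq_prod hp.pos hcprim]
    exact Splits.prod (fun ζ _ => Splits.X_sub_C _)
  have hmsplits := hsplits.of_dvd hmonic.ne_zero hdvd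
  have hdeg : (minpoly (ZMod q) A).degree ≠ 0 :=
    (Polynomial.natDegree_pos_iff_degree_pos.mp (minpoly.natDegree_pos hint)).ne'
  obtain ⟨ζ, hζroot⟩ := hmsplits.exists_eval_eq_zero hdeg
  have hζeig : Module.End.HasEigenvalue A ζ :=
    Module.End.hasEigenvalue_of_isRoot hζroot
  obtain ⟨u, huv⟩ := hζeig.exists_hasEigenvector
  have hAu : A u = ζ • u := huv.apply_eq_smul
  have hu0 : u ≠ 0 := huv.2
  have hu0' : (u : V) ≠ 0 := fun h => hu0 (Subtype.ext h)
  have hζp : ζ ^ p = 1 := by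
    obtain ⟨r, hr⟩ := hdvd
    have h1 := congrArg (Polynomial.eval ζ) hr
    rw [Polynomial.eval_sub, Polynomial.eval_pow, Polynomial.eval_X, Polynomial.eval_one,
      Polynomial.eval_mul] at h1
    rw [show (minpoly (ZMod q) A).eval ζ = 0 from hζroot, zero_mul] at h1
    exact sub_eq_zero.mp h1
  have hAuV : ρ g (u : V) = ζ • (u : V) := by
    have h1 := congrArg Subtype.val hAu
    rw [hAcoe] at h1
    exact h1
  -- g moves every nonzero vector of W
  have hkey : ρ g (u : V) ≠ (u : V) := by
    intro hgw
    have hCle : C ≤ repStabilizer ρ (u : V) := fun x hx => u.2 x hx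
    have hgmem : g ∈ repStabilizer ρ (u : V) := hgw
    have hne : C ≠ repStabilizer ρ (u : V) := by
      intro h
      exact hgC (by rw [h]; exact hgmem)
    have hrel := Subgroup.relIndex_mul_index hCle
    have hrel1 : C.relIndex (repStabilizer ρ (u : V)) ≠ 1 := by
      intro heq
      exact hne (le_antisymm hCle (Subgroup.relIndex_eq_one.mp heq))
    have hrel0 : C.relIndex (repStabilizer ρ (u : V)) ≠ 0 :=
      Subgroup.index_ne_zero_of_finite
    have hidx0 : (repStabilizer ρ (u : V)).index ≠ 0 := Subgroup.index_ne_zero_of_finite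
    have hlt : (repStabilizer ρ (u : V)).index < C.index := by
      rw [← hrel]
      have h2 : 2 ≤ C.relIndex (repStabilizer ρ (u : V)) := by omega
      calc (repStabilizer ρ (u : V)).index < 2 * (repStabilizer ρ (u : V)).index := by omega
      _ ≤ C.relIndex (repStabilizer ρ (u : V)) * (repStabilizer ρ (u : V)).index :=
        Nat.mul_le_mul_right _ h2
    have h3 := hmin (u : V) hu0'
    omega
  have hζ1 : ζ ≠ 1 := by
    intro h
    rw [h, one_smul] at hAuV
    exact hkey hAuV
  have hζord : orderOf ζ = p := orderOf_eq_prime hζp hζ1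
  have hζprim : IsPrimitiveRoot ζ p := hζord ▸ IsPrimitiveRoot.orderOf ζ
  haveI : NeZero p := ⟨hp.ne_zero⟩
  obtain ⟨i, hip, hζi⟩ := hζprim.eq_pow_of_pow_eq_one hcp
  have hgpow : ∀ n : ℕ, ρ (g ^ n) (u : V) = ζ ^ n • (u : V) := by
    intro n
    induction n with
    | zero => simp
    | succ n ih =>
      rw [pow_succ, map_mul, Module.End.mul_apply, hAuV, map_smul, ih, smul_smul, ← pow_succ']
  refine ⟨(u : V), hu0', ?_, ⟨g ^ i, ?_⟩⟩
  · intro w hw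
    have hCle : C ≤ repStabilizer ρ (u : V) := fun x hx => u.2 x hx
    have h1 : (repStabilizer ρ (u : V)).index ≤ C.index :=
      Nat.le_of_dvd (Nat.pos_of_ne_zero Subgroup.index_ne_zero_of_finite)
        (Subgroup.index_dvd_of_le hCle)
    have h2 := hmin w hw
    omega
  · rw [hσc, hgpow i, hζi]
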